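/- arXiv:0903.1132 — 4 statements merged into one kernel-verified Lean document; each statement's English description precedes it below -/
import Mathlib

section
/- Let a > 0 and let γ : [0,L] → ℝ² be a C² unit-speed curve with positive geodesic curvature from (a,0) to (-a,b) for some b ∈ ℝ, whose tangent direction is γ'(t) = e^{iθ(t)} for a strictly increasing continuous θ with π/2 ≤ θ(0) < π and π < θ(L) ≤ 3π/2. Then min{ k_γ(t) : t ∈ [0,L] } ≤ a⁻¹. -/
open Real Set Complex

/-- Real inner product on ℂ viewed as ℝ². -/
noncomputable def inner2 (x y : ℂ) : ℝ := x.re * y.re + x.im * y.im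

/-- Signed geodesic curvature of a unit-speed planar curve (J = multiplication by I). -/
noncomputable def curvU (γ : ℝ → ℂ) (t : ℝ) : ℝ :=
  inner2 (deriv (deriv γ) t) (Complex.I * deriv γ t)

/-- Signed geodesic curvature of a regular planar curve. -/
noncomputable def curvR (γ : ℝ → ℂ) (t : ℝ) : ℝ :=
  (‖deriv γ t‖ ^ 3)⁻¹ * inner2 (deriv (deriv γ) t) (Complex.I * deriv γ t)

/-- The closed curve γ ⊕ [-a,a]: γ on [0,L] followed by the segment from (-a,0) to (a,0). -/
noncomputable def concatSeg (γ : ℝ → ℂ) (L a : ℝ) : ℝ → ℂ :=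
  fun t => if t ≤ L then γ t else Complex.ofReal (-a + (t - L))

theorem stmt3 (a b L : ℝ) (ha : 0 < a) (hL : 0 < L) (γ : ℝ → ℂ) (θ : ℝ → ℝ)
    (hγ : ContDiff ℝ 2 γ)
    (hunit : ∀ t ∈ Icc 0 L, ‖deriv γ t‖ = 1)
    (hcurv : ∀ t ∈ Icc 0 L, 0 < curvU γ t)
    (h0 : γ 0 = (a : ℂ)) (h1 : γ L = Complex.mk (-a) b)
    (hθcont : ContinuousOn θ (Icc 0 L))
    (hθmono : StrictMonoOn θ (Icc 0 L))
    (hθlift : ∀ t ∈ Icc 0 L, deriv γ t = Complex.exp ((θ t : ℂ) * Complex.I))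
    (hθ0 : π / 2 ≤ θ 0) (hθ0' : θ 0 < π) (hθL : π < θ L) (hθL' : θ L ≤ 3 * π / 2) :
    ∃ t ∈ Icc 0 L, curvU γ t ≤ a⁻¹ := by
  by_contra hcon
  push_neg at hcon
  -- basic differentiability facts
  have h21 : (2 : WithTop ℕ∞) = 1 + 1 := by norm_num
  have hd1 : ContDiff ℝ (1 + 1) γ := by rw [← h21]; exact hγ
  obtain ⟨hγdiff, -, hdγ⟩ := contDiff_succ_iff_deriv.mp hd1
  have hdγdiff : Differentiable ℝ (deriv γ) := hdγ.differentiable one_ne_zero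
  have hdγcont : Continuous (deriv γ) := hdγ.continuous
  have hddγcont : Continuous (deriv (deriv γ)) := by
    have h10 : (1 : WithTop ℕ∞) = 0 + 1 := by norm_num
    have := contDiff_succ_iff_deriv.mp (h10 ▸ hdγ)
    exact this.2.2.continuous
  -- the comparison function F
  set F : ℝ → ℝ := fun t => a * (deriv γ t).im - (γ t).re with hF
  have hFcont : Continuous F := by
    exact ((continuous_const.mul (Complex.continuous_im.comp hdγcont)).sub
      (Complex.continuous_re.comp hγdiff.continuous))
  -- F strictly decreasing on [0, L]
  have hFanti : StrictAntiOn F (Icc 0 L) := by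
    apply strictAntiOn_of_deriv_neg (convex_Icc 0 L) hFcont.continuousOn
    intro t ht
    rw [interior_Icc] at ht
    have htIcc : t ∈ Icc 0 L := Ioo_subset_Icc_self ht
    -- derivative of F at t
    have hDγ : HasDerivAt γ (deriv γ t) t := (hγdiff t).hasDerivAt
    have hDDγ : HasDerivAt (deriv γ) (deriv (deriv γ) t) t := (hdγdiff t).hasDerivAt
    set c : ℝ := (deriv γ t).re with hc
    set s : ℝ := (deriv γ t).im with hs
    set u : ℝ := (deriv (deriv γ) t).re with hu
    set v : ℝ := (deriv (deriv γ) t).im with hv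
    have hFim : HasDerivAt (fun t => (deriv γ t).im) v t := by
      exact (Complex.imCLM.hasFDerivAt.comp_hasDerivAt t hDDγ)
    have hFre : HasDerivAt (fun t => (γ t).re) c t := by
      exact (Complex.reCLM.hasFDerivAt.comp_hasDerivAt t hDγ)
    have hFderiv : HasDerivAt F (a * v - c) t := ((hFim.const_mul a).sub hFre)
    rw [hFderiv.deriv]
    -- orthogonality : u * c + v * s = 0
    have hre : HasDerivAt (fun t => (deriv γ t).re) u t := by
      exact (Complex.reCLM.hasFDerivAt.comp_hasDerivAt t hDDγ)
    have him : HasDerivAt (fun t => (deriv γ t).im) v t := hFim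
    have hg : HasDerivAt (fun t => (deriv γ t).re ^ 2 + (deriv γ t).im ^ 2)
        (2 * c * u + 2 * s * v) t := by
      have h1 := (hre.pow 2)
      have h2 := (him.pow 2)
      exact (h1.add h2).congr_deriv (by norm_num; ring)
    have hgconst : ∀ x ∈ Icc (0:ℝ) L, (deriv γ x).re ^ 2 + (deriv γ x).im ^ 2 = 1 := by
      intro x hx
      have := hunit x hx
      have h2 : ‖deriv γ x‖ = 1 := by simpa using this
      have := Complex.sq_norm (deriv γ x)
      rw [h2] at this
      simp [Complex.normSq_apply] at this
      nlinarith [this]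
    have horth : 2 * c * u + 2 * s * v = 0 := by
      have hev : (fun x => (deriv γ x).re ^ 2 + (deriv γ x).im ^ 2) =ᶠ[nhds t] (fun _ => 1) := by
        filter_upwards [Ioo_mem_nhds ht.1 ht.2] with x hx
        exact hgconst x (Ioo_subset_Icc_self hx)
      have := hg.deriv
      rw [hev.deriv_eq] at this
      simp at this
      linarith [this]
    -- k = curvU
    have hk : curvU γ t = -u * s + v * c := by
      simp only [curvU, inner2, Complex.mul_re, Complex.mul_im, Complex.I_re, Complex.I_im]
      ring
    have hunit' : c ^ 2 + s ^ 2 = 1 := hgconst t htIcc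
    have hvkc : v = curvU γ t * c := by
      rw [hk]; linear_combination (s / 2) * horth + (-v) * hunit'
    -- c = cos θ t < 0
    have hθt : deriv γ t = Complex.exp ((θ t : ℂ) * Complex.I) := hθlift t htIcc
    have hcos : c = Real.cos (θ t) := by
      rw [hc, hθt]; exact Complex.exp_ofReal_mul_I_re (θ t)
    have hθlo : π / 2 < θ t := lt_of_le_of_lt hθ0
      (hθmono (left_mem_Icc.mpr hL.le) htIcc ht.1)
    have hθhi : θ t < π + π / 2 := by
      have := hθmono htIcc (right_mem_Icc.mpr hL.le) ht.2
      linarith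
    have hcneg : c < 0 := by
      rw [hcos]; exact Real.cos_neg_of_pi_div_two_lt_of_lt hθlo hθhi
    -- conclude
    have hak : 1 < a * curvU γ t := by
      have h := hcon t htIcc
      calc (1:ℝ) = a * a⁻¹ := by field_simp
      _ < a * curvU γ t := by exact (mul_lt_mul_iff_right₀ ha).mpr h
    have : a * v - c = (a * curvU γ t - 1) * c := by rw [hvkc]; ring
    rw [this]
    exact mul_neg_of_pos_of_neg (by linarith) hcneg
  -- evaluate F at endpoints
  have hm0 : (0:ℝ) ∈ Icc 0 L := left_mem_Icc.mpr hL.le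
  have hmL : L ∈ Icc (0:ℝ) L := right_mem_Icc.mpr hL.le
  have hFL : F L = a * Real.sin (θ L) + a := by
    have h := hθlift L hmL
    simp only [hF, h, h1, Complex.exp_ofReal_mul_I_im]
    ring
  have hF0 : F 0 = a * Real.sin (θ 0) - a := by
    have h := hθlift 0 hm0
    simp only [hF, h, h0, Complex.exp_ofReal_mul_I_im, Complex.ofReal_re]
  have hlt : F L < F 0 := hFanti hm0 hmL hL
  have hs0 : Real.sin (θ 0) ≤ 1 := Real.sin_le_one _
  have hsL : -1 ≤ Real.sin (θ L) := Real.neg_one_le_sin _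
  rw [hFL, hF0] at hlt
  nlinarith
end

section
/- Let a > 0 and let γ : [0,L] → ℝ² be a C² unit-speed curve with positive geodesic curvature from (a,0) to (-a,b), whose tangent is γ'(t) = e^{iθ(t)} for a strictly increasing continuous θ with θ(0) = π/2, and assume θ(L) = 3π/2 if b > 0 and π < θ(L) ≤ 3π/2 if b ≤ 0. Then max{ k_γ(t) : t ∈ [0,L] } ≥ a⁻¹. -/
open Real Set Complex

theorem stmt4 (a b L : ℝ) (ha : 0 < a) (hL : 0 < L) (γ : ℝ → ℂ) (θ : ℝ → ℝ)
    (hγ : ContDiff ℝ 2 γ)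
    (hunit : ∀ t ∈ Icc 0 L, ‖deriv γ t‖ = 1)
    (hcurv : ∀ t ∈ Icc 0 L, 0 < curvU γ t)
    (h0 : γ 0 = (a : ℂ)) (h1 : γ L = Complex.mk (-a) b)
    (hθcont : ContinuousOn θ (Icc 0 L))
    (hθmono : StrictMonoOn θ (Icc 0 L))
    (hθlift : ∀ t ∈ Icc 0 L, deriv γ t = Complex.exp ((θ t : ℂ) * Complex.I))
    (hθ0 : θ 0 = π / 2)
    (hpos : 0 < b → θ L = 3 * π / 2)
    (hneg : b ≤ 0 → π < θ L ∧ θ L ≤ 3 * π / 2) :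
    ∃ t ∈ Icc 0 L, a⁻¹ ≤ curvU γ t := by
  by_contra hcon
  push_neg at hcon
  obtain ⟨α, hαdef⟩ : ∃ x : ℝ, x = θ L - 3 * π / 2 := ⟨_, rfl⟩
  have hθL : θ L = 3 * π / 2 + α := by rw [hαdef]; ring
  -- basic facts about α
  have hα_cases : (0 < b ∧ α = 0) ∨ (b ≤ 0 ∧ -π/2 < α ∧ α ≤ 0) := by
    rcases lt_or_ge 0 b with hb | hb
    · refine Or.inl ⟨hb, ?_⟩
      rw [hαdef, hpos hb]; ring
    · obtain ⟨h1', h2'⟩ := hneg hb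
      exact Or.inr ⟨hb, by rw [hαdef]; linarith, by rw [hαdef]; linarith⟩
  have hα_le : α ≤ 0 := by
    rcases hα_cases with ⟨_, h⟩ | ⟨_, _, h⟩ <;> linarith
  -- differentiability
  have hγ1 : ContDiff ℝ 1 (deriv γ) := by
    have h2 : ContDiff ℝ (1 + 1) γ := by norm_num; exact hγ
    exact (contDiff_succ_iff_deriv.mp h2).2.2
  have hd1 : ∀ t, HasDerivAt γ (deriv γ t) t :=
    fun t => (hγ.differentiable (by norm_num) t).hasDerivAt
  have hd2 : ∀ t, HasDerivAt (deriv γ) (deriv (deriv γ) t) t :=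
    fun t => (hγ1.differentiable (by norm_num) t).hasDerivAt
  -- the auxiliary function
  obtain ⟨w, hw⟩ : ∃ w : ℂ, w = (Real.cos α : ℂ) - (Real.sin α : ℂ) * Complex.I := ⟨_, rfl⟩
  obtain ⟨g, hgdef⟩ : ∃ g : ℝ → ℝ,
      g = fun t => (((γ t) + (a : ℂ) * Complex.I * deriv γ t) * w).re := ⟨_, rfl⟩
  have hg' : ∀ t, HasDerivAt g
      (((deriv γ t + (a : ℂ) * Complex.I * deriv (deriv γ) t) * w).re) t := by
    intro t
    have h : HasDerivAt (fun s => ((γ s) + (a : ℂ) * Complex.I * deriv γ s) * w)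
        ((deriv γ t + (a : ℂ) * Complex.I * deriv (deriv γ) t) * w) t :=
      (((hd1 t).add (((hd2 t).const_mul ((a:ℂ) * Complex.I)))).mul_const w)
    rw [hgdef]
    exact (Complex.reCLM.hasFDerivAt.comp_hasDerivAt t h)
  -- orthogonality on interior
  have horth : ∀ t ∈ Ioo (0:ℝ) L,
      (deriv γ t).re * (deriv (deriv γ) t).re + (deriv γ t).im * (deriv (deriv γ) t).im = 0 := by
    intro t ht
    have hFd : HasDerivAt (fun s => (deriv γ s).re ^ 2 + (deriv γ s).im ^ 2)
        (2 * ((deriv γ t).re * (deriv (deriv γ) t).re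
          + (deriv γ t).im * (deriv (deriv γ) t).im)) t := by
      have hre : HasDerivAt (fun s => (deriv γ s).re) (deriv (deriv γ) t).re t :=
        Complex.reCLM.hasFDerivAt.comp_hasDerivAt t (hd2 t)
      have him : HasDerivAt (fun s => (deriv γ s).im) (deriv (deriv γ) t).im t :=
        Complex.imCLM.hasFDerivAt.comp_hasDerivAt t (hd2 t)
      have := (hre.fun_pow 2).fun_add (him.fun_pow 2)
      refine this.congr_deriv ?_
      ring
    have hFeq : (fun s => (deriv γ s).re ^ 2 + (deriv γ s).im ^ 2) =ᶠ[nhds t]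
        fun _ => 1 := by
      filter_upwards [Icc_mem_nhds ht.1 ht.2] with s hs
      have h := hunit s hs
      have habs : ‖deriv γ s‖ = 1 := h
      have h2 : Complex.normSq (deriv γ s) = 1 := by
        rw [← Complex.sq_norm, habs]; norm_num
      simpa [Complex.normSq_apply, sq] using h2
    have hF0 : HasDerivAt (fun s => (deriv γ s).re ^ 2 + (deriv γ s).im ^ 2) 0 t :=
      (hasDerivAt_const t (1:ℝ)).congr_of_eventuallyEq hFeq
    have := hFd.unique hF0
    linarith
  -- derivative negative on the interior
  have key : ∀ t ∈ Ioo (0:ℝ) L, deriv g t < 0 := by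
    intro t ht
    have htI : t ∈ Icc (0:ℝ) L := Ioo_subset_Icc_self ht
    have h0I : (0:ℝ) ∈ Icc (0:ℝ) L := ⟨le_rfl, hL.le⟩
    have hLI : L ∈ Icc (0:ℝ) L := ⟨hL.le, le_rfl⟩
    obtain ⟨c, hc⟩ : ∃ x : ℝ, x = Real.cos (θ t) := ⟨_, rfl⟩
    obtain ⟨s, hs⟩ : ∃ x : ℝ, x = Real.sin (θ t) := ⟨_, rfl⟩
    obtain ⟨p, hp⟩ : ∃ x : ℝ, x = (deriv (deriv γ) t).re := ⟨_, rfl⟩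
    obtain ⟨q, hq⟩ : ∃ x : ℝ, x = (deriv (deriv γ) t).im := ⟨_, rfl⟩
    have hder : deriv γ t = Complex.exp ((θ t : ℂ) * Complex.I) := hθlift t htI
    have hre : (deriv γ t).re = c := by rw [hder, hc]; exact Complex.exp_ofReal_mul_I_re _
    have him : (deriv γ t).im = s := by rw [hder, hs]; exact Complex.exp_ofReal_mul_I_im _
    have hor : c * p + s * q = 0 := by
      have := horth t ht
      rw [hre, him, ← hp, ← hq] at this; linarith
    have hk : curvU γ t = -(s * p) + c * q := by
      simp only [curvU, inner2, Complex.mul_re, Complex.mul_im, Complex.I_re, Complex.I_im]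
      rw [← hp, ← hq, hre, him]; ring
    have hpyth : c ^ 2 + s ^ 2 = 1 := by
      rw [hc, hs]; exact Real.cos_sq_add_sin_sq (θ t)
    have hkp : p = (s * p - c * q) * s := by linear_combination c * hor - p * hpyth
    have hkq : q = (-(s * p) + c * q) * c := by linear_combination s * hor - q * hpyth
    -- compute deriv g
    have hdg : deriv g t = (c * Real.cos α + s * Real.sin α)
        + a * (-(q * Real.cos α) + p * Real.sin α) := by
      rw [(hg' t).deriv, hw]
      simp only [Complex.add_re, Complex.mul_re, Complex.mul_im, Complex.sub_re,
        Complex.sub_im, Complex.ofReal_re, Complex.ofReal_im, Complex.I_re, Complex.I_im,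
        Complex.add_im]
      rw [← hp, ← hq, hre, him]; ring
    have hcross : q * Real.cos α - p * Real.sin α
        = (-(s*p) + c*q) * (c * Real.cos α + s * Real.sin α) := by
      linear_combination Real.cos α * hkq - Real.sin α * hkp
    have hfact : deriv g t = (1 - a * curvU γ t) * Real.cos (θ t - α) := by
      rw [hdg, hk, Real.cos_sub, ← hc, ← hs]
      linear_combination (-a) * hcross
    rw [hfact]
    have hθt_lb : π / 2 < θ t := by
      rw [← hθ0]; exact hθmono h0I htI ht.1
    have hθt_ub : θ t < θ L := hθmono htI hLI ht.2
    rw [hθL] at hθt_ub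
    have hcosneg : Real.cos (θ t - α) < 0 := by
      apply Real.cos_neg_of_pi_div_two_lt_of_lt
      · linarith
      · linarith
    have hkpos : 0 < 1 - a * curvU γ t := by
      have h2 : a * curvU γ t < a * a⁻¹ := mul_lt_mul_of_pos_left (hcon t htI) ha
      rw [mul_inv_cancel₀ ha.ne'] at h2
      linarith
    nlinarith
  -- g strictly decreasing
  have hgc : Continuous g := by
    rw [hgdef]
    exact Complex.continuous_re.comp
      ((hγ.continuous.add (continuous_const.mul hγ1.continuous)).mul continuous_const)
  have hanti : StrictAntiOn g (Icc 0 L) := by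
    apply strictAntiOn_of_deriv_neg (convex_Icc 0 L) hgc.continuousOn
    intro t ht
    rw [interior_Icc] at ht
    exact key t ht
  have hlt : g L < g 0 := hanti ⟨le_rfl, hL.le⟩ ⟨hL.le, le_rfl⟩ hL
  -- endpoint values
  have hg0 : g 0 = 0 := by
    have hd0 : deriv γ 0 = Complex.exp ((θ 0 : ℂ) * Complex.I) := hθlift 0 ⟨le_rfl, hL.le⟩
    have hre0 : (deriv γ 0).re = Real.cos (θ 0) := by
      rw [hd0]; exact Complex.exp_ofReal_mul_I_re _
    have him0 : (deriv γ 0).im = Real.sin (θ 0) := by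
      rw [hd0]; exact Complex.exp_ofReal_mul_I_im _
    rw [hθ0] at hre0 him0
    rw [hgdef]
    simp only [hw, h0, Complex.add_re, Complex.mul_re, Complex.mul_im, Complex.sub_re,
      Complex.sub_im, Complex.ofReal_re, Complex.ofReal_im, Complex.I_re, Complex.I_im,
      Complex.add_im, hre0, him0, Real.cos_pi_div_two, Real.sin_pi_div_two]
    ring
  have hgL : g L = -a * Real.cos α + b * Real.sin α + a := by
    have hdL : deriv γ L = Complex.exp ((θ L : ℂ) * Complex.I) := hθlift L ⟨hL.le, le_rfl⟩
    have hreL : (deriv γ L).re = Real.cos (θ L) := by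
      rw [hdL]; exact Complex.exp_ofReal_mul_I_re _
    have himL : (deriv γ L).im = Real.sin (θ L) := by
      rw [hdL]; exact Complex.exp_ofReal_mul_I_im _
    have hc32 : Real.cos (3 * π / 2) = 0 := by
      rw [show (3:ℝ) * π / 2 = π + π/2 by ring, Real.cos_add]; simp
    have hs32 : Real.sin (3 * π / 2) = -1 := by
      rw [show (3:ℝ) * π / 2 = π + π/2 by ring, Real.sin_add]; simp
    have hcosL : Real.cos (θ L) = Real.sin α := by
      rw [hθL, Real.cos_add, hc32, hs32]; ring
    have hsinL : Real.sin (θ L) = -Real.cos α := by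
      rw [hθL, Real.sin_add, hc32, hs32]; ring
    have h1re : (γ L).re = -a := by rw [h1]
    have h1im : (γ L).im = b := by rw [h1]
    rw [hgdef]
    simp only [hw, Complex.add_re, Complex.mul_re, Complex.mul_im, Complex.sub_re,
      Complex.sub_im, Complex.ofReal_re, Complex.ofReal_im, Complex.I_re, Complex.I_im,
      Complex.add_im, hreL, himL, hcosL, hsinL, h1re, h1im]
    nlinarith [Real.sin_sq_add_cos_sq α]
  rw [hg0, hgL] at hlt
  -- final contradiction
  have hcos1 : Real.cos α ≤ 1 := Real.cos_le_one α
  rcases hα_cases with ⟨hb, hα0⟩ | ⟨hb, hα1, hα2⟩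
  · rw [hα0] at hlt
    simp [Real.cos_zero, Real.sin_zero] at hlt
  · have hsin : Real.sin α ≤ 0 := by
      have hge : 0 ≤ Real.sin (-α) := Real.sin_nonneg_of_nonneg_of_le_pi (by linarith)
        (by nlinarith [Real.pi_pos])
      rw [Real.sin_neg] at hge; linarith
    nlinarith [mul_nonneg (neg_nonneg.mpr hb) (neg_nonneg.mpr hsin), Real.pi_pos]
end

section
/- Let ω ∈ (0, π). Then for every pair α, β ∈ C²([0,1],ℝ) with α(0)=α(1)=β(0)=β(1)=0, if -α'' - ω²α = 0 and -β'' - 2ωα' + ω²β = 0 on [0,1], then α ≡ 0 and β ≡ 0. (Injectivity of the linearization at the small circular arc.) -/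
open Real Set Complex

lemma wkey (ω k : ℝ) (hω : ω ≠ 0) (φ s c s' c' : ℝ → ℝ)
    (hφ : ContDiff ℝ 2 φ)
    (hs : ∀ t, HasDerivAt s (s' t) t) (hs' : ∀ t, HasDerivAt s' (k * s t) t)
    (hc : ∀ t, HasDerivAt c (c' t) t) (hc' : ∀ t, HasDerivAt c' (k * c t) t)
    (hs0 : s 0 = 0) (hc0 : c 0 = 1)
    (hwr : ∀ t, c' t * s t - s' t * c t = -ω)
    (hφ0 : φ 0 = 0)
    (heq : ∀ t ∈ Icc (0:ℝ) 1, deriv (deriv φ) t = k * φ t) :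
    ∀ t ∈ Icc (0:ℝ) 1, φ t = deriv φ 0 * s t / ω := by
  have hφd : Differentiable ℝ φ := hφ.differentiable (by norm_num)
  have hφd' : Differentiable ℝ (deriv φ) := by
    have := (contDiff_succ_iff_deriv.mp (by exact_mod_cast hφ : ContDiff ℝ (1+1) φ)).2
    exact this.2.differentiable (by norm_num)
  have hd1 : ∀ t, HasDerivAt φ (deriv φ t) t := fun t => (hφd t).hasDerivAt
  have hd2 : ∀ t, HasDerivAt (deriv φ) (deriv (deriv φ) t) t := fun t => (hφd' t).hasDerivAt
  have cφ' : Continuous (deriv φ) := hφd'.continuous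
  have cφ : Continuous φ := hφd.continuous
  have cs : Continuous s := continuous_iff_continuousAt.mpr fun t => (hs t).continuousAt
  have cs' : Continuous s' := continuous_iff_continuousAt.mpr fun t => (hs' t).continuousAt
  have cc : Continuous c := continuous_iff_continuousAt.mpr fun t => (hc t).continuousAt
  have cc' : Continuous c' := continuous_iff_continuousAt.mpr fun t => (hc' t).continuousAt
  have wron : ∀ (u u' : ℝ → ℝ), (∀ t, HasDerivAt u (u' t) t) → (∀ t, HasDerivAt u' (k * u t) t) →
      Continuous u → Continuous u' →
      ∀ x ∈ Icc (0:ℝ) 1, deriv φ x * u x - φ x * u' x = deriv φ 0 * u 0 - φ 0 * u' 0 := by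
    intro u u' hu hu' cu cu' x hx
    have hder : ∀ y ∈ Ico (0:ℝ) 1, HasDerivWithinAt
        (fun t => deriv φ t * u t - φ t * u' t) 0 (Ici y) y := by
      intro y hy
      have hy' : y ∈ Icc (0:ℝ) 1 := ⟨hy.1, hy.2.le⟩
      have h := ((hd2 y).mul (hu y)).sub ((hd1 y).mul (hu' y))
      have : deriv (deriv φ) y * u y + deriv φ y * u' y -
          (deriv φ y * u' y + φ y * (k * u y)) = 0 := by
        rw [heq y hy']; ring
      exact (this ▸ h).hasDerivWithinAt
    have hcont : ContinuousOn (fun t => deriv φ t * u t - φ t * u' t) (Icc 0 1) :=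
      ((cφ'.mul cu).sub (cφ.mul cu')).continuousOn
    exact constant_of_has_deriv_right_zero hcont hder x hx
  intro t ht
  have hW := wron s s' hs hs' cs cs' t ht
  have hV := wron c c' hc hc' cc cc' t ht
  rw [hs0, hφ0] at hW
  rw [hc0, hφ0] at hV
  simp only [mul_zero, zero_mul, sub_zero, mul_one] at hW hV
  have hwt := hwr t
  have : φ t * ω = deriv φ 0 * s t := by
    linear_combination s t * hV - c t * hW + φ t * hwt
  field_simp
  linarith [this]

theorem stmt11 (ω : ℝ) (hω0 : 0 < ω) (hωπ : ω < π) (α β : ℝ → ℝ)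
    (hα : ContDiff ℝ 2 α) (hβ : ContDiff ℝ 2 β)
    (hα0 : α 0 = 0) (hα1 : α 1 = 0) (hβ0 : β 0 = 0) (hβ1 : β 1 = 0)
    (heq1 : ∀ t ∈ Icc (0:ℝ) 1, -(deriv (deriv α) t) - ω ^ 2 * α t = 0)
    (heq2 : ∀ t ∈ Icc (0:ℝ) 1, -(deriv (deriv β) t) - 2 * ω * deriv α t + ω ^ 2 * β t = 0) :
    (∀ t ∈ Icc (0:ℝ) 1, α t = 0) ∧ (∀ t ∈ Icc (0:ℝ) 1, β t = 0) := by
  have hωne : ω ≠ 0 := ne_of_gt hω0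
  -- trig solutions
  have hlin : ∀ t : ℝ, HasDerivAt (fun x : ℝ => ω * x) ω t := by
    intro t
    simpa using (hasDerivAt_id t).const_mul ω
  have hssin : ∀ t : ℝ, HasDerivAt (fun x => Real.sin (ω * x)) (ω * Real.cos (ω * t)) t := by
    intro t
    exact ((Real.hasDerivAt_sin (ω * t)).comp t (hlin t)).congr_deriv (by ring)
  have hccos : ∀ t : ℝ, HasDerivAt (fun x => Real.cos (ω * x)) (-(ω * Real.sin (ω * t))) t := by
    intro t
    have := (Real.hasDerivAt_cos (ω * t)).comp t (hlin t)
    exact this.congr_deriv (by ring)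
  have hssinh : ∀ t : ℝ, HasDerivAt (fun x => Real.sinh (ω * x)) (ω * Real.cosh (ω * t)) t := by
    intro t
    exact ((Real.hasDerivAt_sinh (ω * t)).comp t (hlin t)).congr_deriv (by ring)
  have hccosh : ∀ t : ℝ, HasDerivAt (fun x => Real.cosh (ω * x)) (ω * Real.sinh (ω * t)) t := by
    intro t
    exact ((Real.hasDerivAt_cosh (ω * t)).comp t (hlin t)).congr_deriv (by ring)
  -- solve for α
  have hαeq : ∀ t ∈ Icc (0:ℝ) 1, α t = deriv α 0 * Real.sin (ω * t) / ω := by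
    apply wkey ω (-(ω^2)) hωne α _ _ (fun t => ω * Real.cos (ω * t)) (fun t => -(ω * Real.sin (ω * t))) hα hssin
    · intro t
      have h := ((hccos t).const_mul ω)
      exact h.congr_deriv (by ring)
    · exact hccos
    · intro t
      have h := ((hssin t).const_mul ω).neg
      exact h.congr_deriv (by ring)
    · simp
    · simp
    · intro t
      have := Real.sin_sq_add_cos_sq (ω * t)
      linear_combination (-ω) * this
    · exact hα0
    · intro t ht
      have := heq1 t ht
      linarith
  have hd0 : deriv α 0 = 0 := by
    have h1 := hαeq 1 (by constructor <;> norm_num)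
    rw [hα1, mul_one] at h1
    have hsω : Real.sin ω > 0 := Real.sin_pos_of_pos_of_lt_pi hω0 hωπ
    have := h1.symm
    field_simp at this
    rcases mul_eq_zero.mp (this.trans (mul_zero ω)) with h | h
    · exact h
    · exact absurd h (ne_of_gt hsω)
  have hαz : ∀ t ∈ Icc (0:ℝ) 1, α t = 0 := by
    intro t ht
    rw [hαeq t ht, hd0]; ring
  refine ⟨hαz, ?_⟩
  -- deriv α = 0 on Icc
  have hαd' : Differentiable ℝ (deriv α) := by
    have := (contDiff_succ_iff_deriv.mp (by exact_mod_cast hα : ContDiff ℝ (1+1) α)).2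
    exact this.2.differentiable (by norm_num)
  have hdαz : ∀ t ∈ Icc (0:ℝ) 1, deriv α t = 0 := by
    have hIoo : EqOn (deriv α) (fun _ => 0) (Ioo (0:ℝ) 1) := by
      intro t ht
      have hev : α =ᶠ[nhds t] fun _ => 0 := by
        filter_upwards [isOpen_Ioo.mem_nhds ht] with y hy
        exact hαz y ⟨hy.1.le, hy.2.le⟩
      simp [hev.deriv_eq]
    have hcl := hIoo.closure hαd'.continuous continuous_const
    intro t ht
    have : t ∈ closure (Ioo (0:ℝ) 1) := by
      rw [closure_Ioo (by norm_num : (0:ℝ) ≠ 1)]; exact ht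
    exact hcl this
  -- solve for β
  have hβeq : ∀ t ∈ Icc (0:ℝ) 1, β t = deriv β 0 * Real.sinh (ω * t) / ω := by
    apply wkey ω (ω^2) hωne β _ _ (fun t => ω * Real.cosh (ω * t)) (fun t => ω * Real.sinh (ω * t)) hβ hssinh
    · intro t
      have h := ((hccosh t).const_mul ω)
      exact h.congr_deriv (by ring)
    · exact hccosh
    · intro t
      have h := ((hssinh t).const_mul ω)
      exact h.congr_deriv (by ring)
    · simp
    · simp
    · intro t
      have := Real.cosh_sq_sub_sinh_sq (ω * t)
      linear_combination (-ω) * this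
    · exact hβ0
    · intro t ht
      have h1 := heq2 t ht
      have h2 := hdαz t ht
      rw [h2] at h1
      linarith
  have hd0β : deriv β 0 = 0 := by
    have h1 := hβeq 1 (by constructor <;> norm_num)
    rw [hβ1, mul_one] at h1
    have hsω : Real.sinh ω > 0 := by positivity
    have := h1.symm
    field_simp at this
    rcases mul_eq_zero.mp (this.trans (mul_zero ω)) with h | h
    · exact h
    · exact absurd h (ne_of_gt hsω)
  intro t ht
  rw [hβeq t ht, hd0β]; ring
end

section
/- Let a > 0 and let γ : [0,L] → ℝ² be a C² unit-speed curve with geodesic curvature satisfying 0 < k_γ(t) ≤ k_max < a⁻¹ for all t, from (a,0) to (-a,0), with γ ⊕ [-a,a] simple, γ'(0) = e^{-iπ/2}, and strictly increasing tangent angle θ ∈ (-π/2, 5π/2] with θ(L) ∈ (π, 5π/2]. Let t₀ = sup{ t : θ(s) ≤ π/2 for all s ≤ t }. Then t₀ < L, θ(t₀) = π/2, and the first coordinate of γ(t₀) satisfies γ₁(t₀) ≥ a + 2/k_max. -/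
open Real Set Complex

theorem stmt19 (a L kmax : ℝ) (ha : 0 < a) (hL : 0 < L) (γ : ℝ → ℂ) (θ : ℝ → ℝ)
    (hγ : ContDiff ℝ 2 γ)
    (hunit : ∀ t ∈ Icc 0 L, ‖deriv γ t‖ = 1)
    (hcurv : ∀ t ∈ Icc 0 L, 0 < curvU γ t ∧ curvU γ t ≤ kmax)
    (hkmax : kmax < a⁻¹)
    (h0 : γ 0 = (a : ℂ)) (h1 : γ L = (-a : ℂ))
    (hsimple : Set.InjOn (concatSeg γ L a) (Ico 0 (L + 2 * a)))
    (hd0 : deriv γ 0 = Complex.exp ((-(π / 2) : ℂ) * Complex.I))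
    (hθcont : ContinuousOn θ (Icc 0 L)) (hθmono : StrictMonoOn θ (Icc 0 L))
    (hθlift : ∀ t ∈ Icc 0 L, deriv γ t = Complex.exp ((θ t : ℂ) * Complex.I))
    (hθinit : θ 0 = -(π / 2))
    (hθrange : ∀ t ∈ Icc 0 L, -(π / 2) < θ t ∨ t = 0)
    (hθrange' : ∀ t ∈ Icc 0 L, θ t ≤ 5 * π / 2)
    (hθL : π < θ L)
    (t₀ : ℝ) (ht₀ : t₀ = sSup {t | t ∈ Icc 0 L ∧ ∀ s ∈ Icc 0 t, θ s ≤ π / 2}) :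
    t₀ < L ∧ θ t₀ = π / 2 ∧ a + 2 / kmax ≤ (γ t₀).re := by
  have hπ : (0:ℝ) < π := Real.pi_pos
  have h0L : (0:ℝ) ∈ Icc 0 L := ⟨le_rfl, hL.le⟩
  have hLL : L ∈ Icc (0:ℝ) L := ⟨hL.le, le_rfl⟩
  -- find t* with θ t* = π/2 by IVT
  obtain ⟨ts, hts, hθts⟩ : ∃ ts ∈ Icc (0:ℝ) L, θ ts = π / 2 := by
    have := intermediate_value_Icc hL.le hθcont
    have hmem : π / 2 ∈ Icc (θ 0) (θ L) := by
      constructor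
      · rw [hθinit]; linarith
      · linarith
    obtain ⟨ts, h1, h2⟩ := this hmem
    exact ⟨ts, h1, h2⟩
  -- the set S equals Icc 0 ts
  have hSeq : {t | t ∈ Icc 0 L ∧ ∀ s ∈ Icc 0 t, θ s ≤ π / 2} = Icc 0 ts := by
    ext t
    constructor
    · rintro ⟨htL, hall⟩
      refine ⟨htL.1, ?_⟩
      by_contra hlt
      push_neg at hlt
      have : θ ts < θ t := hθmono hts htL hlt
      have : θ t ≤ π / 2 := hall t ⟨htL.1, le_rfl⟩
      linarith [hθts ▸ ‹θ ts < θ t›]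
    · rintro ⟨ht0, hts'⟩
      have htL : t ∈ Icc 0 L := ⟨ht0, hts'.trans hts.2⟩
      refine ⟨htL, fun s hs => ?_⟩
      have hsL : s ∈ Icc 0 L := ⟨hs.1, (hs.2.trans hts').trans hts.2⟩
      have : θ s ≤ θ ts := hθmono.monotoneOn hsL hts (hs.2.trans hts')
      linarith [hθts ▸ this]
  have ht₀ts : t₀ = ts := by
    rw [ht₀, hSeq, csSup_Icc hts.1]
  subst ht₀ts
  have ht₀L : t₀ < L := by
    rcases lt_or_eq_of_le hts.2 with h | h
    · exact h
    · exfalso; rw [h] at hθts; linarith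
  refine ⟨ht₀L, hθts, ?_⟩
  -- curvature bound gives kmax > 0
  have hk0 : 0 < kmax := lt_of_lt_of_le (hcurv 0 h0L).1 (hcurv 0 h0L).2
  -- differentiability
  have hγd : Differentiable ℝ γ := hγ.differentiable (by norm_num)
  have hγ' : ContDiff ℝ 1 (deriv γ) := by
    have := (contDiff_succ_iff_deriv (n := 1)).mp (by exact_mod_cast hγ)
    exact this.2.2
  have hγ'd : Differentiable ℝ (deriv γ) := hγ'.differentiable (by norm_num)
  -- the monotone function g
  have hsq : ∀ z : ℂ, ‖z‖ = 1 → z.re ^ 2 + z.im ^ 2 = 1 := by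
    intro z hz
    have h := Complex.sq_norm z
    rw [Complex.normSq_apply, hz] at h
    nlinarith [h]
  set g : ℝ → ℝ := fun t => kmax * (γ t).re - (deriv γ t).im with hg
  have hgd : ∀ t : ℝ, HasDerivAt g (kmax * (deriv γ t).re - (deriv (deriv γ) t).im) t := by
    intro t
    have h1 : HasDerivAt (fun t => (γ t).re) ((deriv γ t).re) t :=
      Complex.reCLM.hasFDerivAt.comp_hasDerivAt t (hγd t).hasDerivAt
    have h2 : HasDerivAt (fun t => (deriv γ t).im) ((deriv (deriv γ) t).im) t :=
      Complex.imCLM.hasFDerivAt.comp_hasDerivAt t (hγ'd t).hasDerivAt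
    exact (h1.const_mul kmax).sub h2
  -- θ bounds on [0, t₀]
  have hθub : ∀ s ∈ Icc (0:ℝ) t₀, θ s ≤ π / 2 := by
    intro s hs
    have hsL : s ∈ Icc 0 L := ⟨hs.1, hs.2.trans hts.2⟩
    have : θ s ≤ θ t₀ := hθmono.monotoneOn hsL hts hs.2
    linarith [hθts ▸ this]
  have hθlb : ∀ s ∈ Icc (0:ℝ) L, -(π/2) ≤ θ s := by
    intro s hs
    rcases hθrange s hs with h | h
    · linarith
    · rw [h, hθinit]
  -- deriv of g nonneg on interior
  have hmono : MonotoneOn g (Icc 0 t₀) := by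
    apply monotoneOn_of_deriv_nonneg (convex_Icc 0 t₀)
    · exact fun t _ => ((hgd t).continuousAt).continuousWithinAt
    · intro t ht
      exact ((hgd t).differentiableAt).differentiableWithinAt
    · intro t ht
      rw [interior_Icc] at ht
      have htL : t ∈ Icc 0 L := ⟨ht.1.le, ht.2.le.trans hts.2⟩
      have htLo : t ∈ Ioo (0:ℝ) L := ⟨ht.1, ht.2.trans_le hts.2⟩
      rw [(hgd t).deriv]
      -- notation
      set u := deriv γ t with hu
      set v := deriv (deriv γ) t with hv
      -- unit speed: u.re^2 + u.im^2 = 1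
      have hN : u.re ^ 2 + u.im ^ 2 = 1 := hsq u (hunit t htL)
      -- perpendicularity: v.re*u.re + v.im*u.im = 0
      have hperp : v.re * u.re + v.im * u.im = 0 := by
        have hNd : HasDerivAt (fun s => (deriv γ s).re ^ 2 + (deriv γ s).im ^ 2)
            (2 * (deriv γ t).re * v.re + 2 * (deriv γ t).im * v.im) t := by
          have h1 : HasDerivAt (fun s => (deriv γ s).re) (v.re) t :=
            Complex.reCLM.hasFDerivAt.comp_hasDerivAt t (hγ'd t).hasDerivAt
          have h2 : HasDerivAt (fun s => (deriv γ s).im) (v.im) t :=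
            Complex.imCLM.hasFDerivAt.comp_hasDerivAt t (hγ'd t).hasDerivAt
          have := (h1.fun_pow 2).add (h2.fun_pow 2)
          exact this.congr_deriv (by norm_num)
        have hEq : (fun s => (deriv γ s).re ^ 2 + (deriv γ s).im ^ 2) =ᶠ[nhds t]
            fun _ => 1 := by
          filter_upwards [isOpen_Ioo.mem_nhds htLo] with s hs
          exact hsq _ (hunit s ⟨hs.1.le, hs.2.le⟩)
        have hNd0 : HasDerivAt (fun s => (deriv γ s).re ^ 2 + (deriv γ s).im ^ 2) 0 t :=
          (hasDerivAt_const t (1:ℝ)).congr_of_eventuallyEq hEq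
        have := hNd.unique hNd0
        nlinarith [this]
      -- v.im = curvU γ t * u.re
      have hcu : curvU γ t = v.re * (-u.im) + v.im * u.re := by
        simp only [curvU, inner2, Complex.mul_re, Complex.mul_im, Complex.I_re,
          Complex.I_im, hu, hv]
        ring
      have hvim : v.im = curvU γ t * u.re := by
        rw [hcu]
        linear_combination u.im * hperp - v.im * hN
      -- u.re = cos θ t ≥ 0
      have hure : u.re = Real.cos (θ t) := by
        rw [hu, hθlift t htL, Complex.exp_ofReal_mul_I_re]
      have hcos : 0 ≤ u.re := by
        rw [hure]
        apply Real.cos_nonneg_of_mem_Icc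
        exact ⟨hθlb t htL, hθub t ⟨ht.1.le, ht.2.le⟩⟩
      have hck : curvU γ t ≤ kmax := (hcurv t htL).2
      rw [hvim]
      nlinarith
  -- endpoints of Icc
  have ht₀0 : (0:ℝ) ≤ t₀ := hts.1
  have hgle : g 0 ≤ g t₀ := hmono ⟨le_rfl, ht₀0⟩ ⟨ht₀0, le_rfl⟩ ht₀0
  -- evaluate g 0 and g t₀
  have hg0 : g 0 = kmax * a + 1 := by
    have him : (deriv γ 0).im = Real.sin (θ 0) := by
      rw [hθlift 0 h0L, Complex.exp_ofReal_mul_I_im]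
    simp only [hg, h0, Complex.ofReal_re, him, hθinit, Real.sin_neg, Real.sin_pi_div_two]
    ring
  have hgt : g t₀ = kmax * (γ t₀).re - 1 := by
    have him : (deriv γ t₀).im = Real.sin (θ t₀) := by
      rw [hθlift t₀ hts, Complex.exp_ofReal_mul_I_im]
    simp only [hg, him, hθts, Real.sin_pi_div_two]
  rw [hg0, hgt] at hgle
  have h2k : 2 / kmax ≤ (γ t₀).re - a := by
    rw [div_le_iff₀ hk0]
    nlinarith
  linarith
end
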